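/- Let F ⊆ K be finite fields of characteristic p with q = |F|, and suppose the degree n = [K : F] is a power of p. Then an element η ∈ K is a normal element of K over F if and only if Tr_{K/F}(η) ≠ 0. -/

import Mathlib

open Polynomial Finset

/-- If the degree `n = [K : F]` is a power of the characteristic `p` of `F`, then
`η ∈ K` is a normal element of `K` over `F` iff `Tr_{K/F}(η) ≠ 0`. -/
theorem stmt14 (F K : Type*) [Field F] [Fintype F] [Field K] [Fintype K] [Algebra F K]
    (p n : ℕ) [CharP F p] (hn : Module.finrank F K = n) (hpow : ∃ m : ℕ, n = p ^ m)
    (η : K) :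
    (LinearIndependent F (fun i : Fin n => η ^ Fintype.card F ^ (i : ℕ)) ∧
        Submodule.span F (Set.range fun i : Fin n => η ^ Fintype.card F ^ (i : ℕ)) = ⊤) ↔
      Algebra.trace F K η ≠ 0 := by
  classical
  obtain ⟨m, hm⟩ := hpow
  set q := Fintype.card F with hq
  haveI hp : Fact p.Prime := ⟨CharP.char_is_prime F p⟩
  haveI : CharP K p := charP_of_injective_algebraMap (algebraMap F K).injective p
  obtain ⟨f, -, hqf⟩ := FiniteField.card F p
  have hq1 : 1 < q := Fintype.one_lt_card
  have hn0 : 0 < n := hn ▸ Module.finrank_pos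
  have hfix : ∀ a : F, (algebraMap F K a) ^ q = algebraMap F K a := fun a => by
    rw [← map_pow, FiniteField.pow_card]
  -- Frobenius as an F-linear endomorphism
  set φ : Module.End F K :=
    { toFun := fun x => x ^ q
      map_add' := fun x y => by
        show (x + y) ^ q = x ^ q + y ^ q
        rw [hq, hqf]; exact add_pow_char_pow x y p _
      map_smul' := fun a x => by
        show (a • x) ^ q = a • x ^ q
        simp only [Algebra.smul_def, mul_pow, hfix] } with hφdef
  have hφ : ∀ x : K, φ x = x ^ q := fun _ => rfl
  have hφpow : ∀ (i : ℕ) (x : K), (φ ^ i) x = x ^ q ^ i := by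
    intro i
    induction i with
    | zero => intro x; simp
    | succ i ih =>
      intro x
      rw [pow_succ, Module.End.mul_apply, hφ, ih, ← pow_mul, ← pow_succ']
  have hcardK : Fintype.card K = q ^ n := by
    rw [Module.card_eq_pow_finrank (K := F) (V := K), hn]
  have hφn : φ ^ n = 1 := by
    ext x
    rw [hφpow, Module.End.one_apply, ← hcardK, FiniteField.pow_card]
  haveI : Nontrivial (Module.End F K) :=
    ⟨⟨1, 0, fun h => one_ne_zero (α := K) (by simpa using LinearMap.congr_fun h 1)⟩⟩
  haveI : CharP (Module.End F K) p :=
    charP_of_injective_algebraMap (algebraMap F (Module.End F K)).injective p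
  set ξ : Module.End F K := φ - 1 with hξdef
  have hξn : ξ ^ n = 0 := by
    rw [hξdef, hm, sub_pow_char_pow_of_commute p m (Commute.one_right φ), ← hm, hφn,
      one_pow, sub_self]
  have hξbig : ∀ a, n ≤ a → ξ ^ a = 0 := fun a ha => by
    rw [← Nat.sub_add_cancel ha, pow_add, hξn, mul_zero]
  -- the polynomial identity (X-1)^(n-1) = 1 + X + ... + X^(n-1) over F
  have hX : (X : F[X]) - 1 ≠ 0 := by
    simpa using X_sub_C_ne_zero (1 : F)
  have hpoly : ((X : F[X]) - 1) ^ (n - 1) = ∑ i ∈ range n, (X : F[X]) ^ i := by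
    apply mul_right_cancel₀ hX
    rw [← pow_succ, Nat.sub_add_cancel hn0, geom_sum_mul, hm,
      sub_pow_char_pow, one_pow]
  have hT : ξ ^ (n - 1) = ∑ i ∈ range n, φ ^ i := by
    have h := congrArg (aeval φ) hpoly
    simpa [hξdef] using h
  -- Frobenius as an algebra automorphism
  set gh : K →ₐ[F] K :=
    { toFun := fun x => x ^ q
      map_one' := one_pow q
      map_mul' := fun x y => mul_pow x y q
      map_zero' := zero_pow (by omega)
      map_add' := fun x y => by
        show (x + y) ^ q = x ^ q + y ^ q
        rw [hq, hqf]; exact add_pow_char_pow x y p _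
      commutes' := hfix } with hghdef
  have ghbij : Function.Bijective gh :=
    Finite.injective_iff_bijective.mp gh.toRingHom.injective
  set g : K ≃ₐ[F] K := AlgEquiv.ofBijective gh ghbij with hgdef
  have hg : ∀ x : K, g x = x ^ q := fun _ => rfl
  have hgpow : ∀ (i : ℕ) (x : K), (g ^ i) x = x ^ q ^ i := by
    intro i
    induction i with
    | zero => intro x; simp
    | succ i ih =>
      intro x
      rw [pow_succ, AlgEquiv.mul_apply, hg, ih, ← pow_mul, ← pow_succ']
  have hcardGal : Fintype.card (K ≃ₐ[F] K) = n := by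
    rw [← Nat.card_eq_fintype_card, IsGalois.card_aut_eq_finrank, hn]
  have hginj : Function.Injective (fun i : Fin n => g ^ (i : ℕ)) := by
    intro i j hij
    by_contra hne
    have hvne : (i : ℕ) ≠ (j : ℕ) := fun h => hne (Fin.ext h)
    -- reduce to a nontrivial power being the identity
    have key : ∀ d : ℕ, 0 < d → d < n → g ^ d ≠ 1 := by
      intro d hd0 hdn hgd
      obtain ⟨ζ, hζ⟩ := IsCyclic.exists_generator (α := Kˣ)
      have hζord : orderOf ζ = q ^ n - 1 := by
        rw [orderOf_eq_card_of_forall_mem_zpowers hζ, Nat.card_eq_fintype_card, Fintype.card_units, hcardK]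
      have h3 : (ζ : K) ^ q ^ d = (ζ : K) := by
        have := congrArg (fun e : K ≃ₐ[F] K => e (ζ : K)) hgd
        simpa [hgpow] using this
      have h3' : ζ ^ q ^ d = ζ := Units.ext (by rw [Units.val_pow_eq_pow_val]; exact h3)
      have hqd1 : 1 < q ^ d := Nat.one_lt_pow hd0.ne' hq1
      have h4 : ζ ^ (q ^ d - 1) = 1 := by
        have h5 : ζ ^ (q ^ d - 1) * ζ = 1 * ζ := by
          rw [one_mul, ← pow_succ, Nat.sub_add_cancel (by omega), h3']
        exact mul_right_cancel h5
      have h6 : q ^ n - 1 ∣ q ^ d - 1 := hζord ▸ orderOf_dvd_of_pow_eq_one h4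
      have h7 : q ^ n - 1 ≤ q ^ d - 1 := Nat.le_of_dvd (by omega) h6
      have h8 : q ^ d < q ^ n := Nat.pow_lt_pow_right hq1 hdn
      omega
    rcases Nat.lt_or_ge (i : ℕ) (j : ℕ) with hlt | hge
    · apply key ((j : ℕ) - (i : ℕ)) (by omega) (by omega)
      have h2 : g ^ ((j : ℕ) - (i : ℕ)) * g ^ (i : ℕ) = 1 * g ^ (i : ℕ) := by
        rw [← pow_add, one_mul, Nat.sub_add_cancel (by omega)]
        exact hij.symm
      exact mul_right_cancel h2
    · apply key ((i : ℕ) - (j : ℕ)) (by omega) (by omega)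
      have h2 : g ^ ((i : ℕ) - (j : ℕ)) * g ^ (j : ℕ) = 1 * g ^ (j : ℕ) := by
        rw [← pow_add, one_mul, Nat.sub_add_cancel (by omega)]
        exact hij
      exact mul_right_cancel h2
  have htrace : ∀ x : K, algebraMap F K (Algebra.trace F K x) = ∑ i ∈ range n, (φ ^ i) x := by
    intro x
    rw [trace_eq_sum_automorphisms]
    have hbij : Function.Bijective (fun i : Fin n => g ^ (i : ℕ)) :=
      (Fintype.bijective_iff_injective_and_card _).mpr
        ⟨hginj, by rw [Fintype.card_fin, hcardGal]⟩
    rw [← Function.Bijective.sum_comp hbij fun e => e x, Finset.sum_range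
      (fun i => (φ ^ i) x)]
    exact Finset.sum_congr rfl fun i _ => by rw [hgpow, hφpow]
  have hsum_apply : ∀ x : K, (∑ i ∈ range n, φ ^ i) x = ∑ i ∈ range n, (φ ^ i) x := by
    intro x
    simp [LinearMap.sum_apply]
  constructor
  · rintro ⟨-, hspan⟩ htr0
    have hTη : (ξ ^ (n - 1)) η = 0 := by
      have h5 := htrace η
      rw [htr0, map_zero] at h5
      rw [hT, hsum_apply, ← h5]
    have hker : ∀ i : ℕ, (ξ ^ (n - 1)) ((φ ^ i) η) = 0 := by
      intro i
      have hcomm : ξ ^ (n - 1) * φ ^ i = φ ^ i * ξ ^ (n - 1) := by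
        refine Commute.pow_pow ?_ _ _
        exact (Commute.refl φ).sub_left (Commute.one_left φ)
      calc (ξ ^ (n - 1)) ((φ ^ i) η) = (ξ ^ (n - 1) * φ ^ i) η := rfl
        _ = (φ ^ i) ((ξ ^ (n - 1)) η) := by rw [hcomm]; rfl
        _ = 0 := by rw [hTη, map_zero]
    have hzero : ξ ^ (n - 1) = 0 := by
      have hle : Submodule.span F (Set.range fun i : Fin n => η ^ q ^ (i : ℕ)) ≤
          LinearMap.ker (ξ ^ (n - 1)) := by
        rw [Submodule.span_le]
        rintro _ ⟨i, rfl⟩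
        have : η ^ q ^ (i : ℕ) = (φ ^ (i : ℕ)) η := (hφpow _ _).symm
        simp only [LinearMap.mem_ker, SetLike.mem_coe]
        rw [this]
        exact hker _
      rw [hspan, top_le_iff] at hle
      exact LinearMap.ker_eq_top.mp hle
    apply Algebra.trace_ne_zero F K
    apply LinearMap.ext
    intro x
    apply (algebraMap F K).injective
    rw [htrace x, ← hsum_apply, ← hT, hzero, LinearMap.zero_apply,
      LinearMap.zero_apply, map_zero]
  · intro htr
    have hTη : (ξ ^ (n - 1)) η ≠ 0 := by
      rw [hT, hsum_apply, ← htrace η]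
      exact fun h => htr (by
        apply (algebraMap F K).injective
        rw [h, map_zero])
    -- linear independence of the (φ-1)-power images of η
    have hindep : LinearIndependent F fun k : Fin n => (ξ ^ (k : ℕ)) η := by
      rw [Fintype.linearIndependent_iff]
      intro c hc
      have H : ∀ k : ℕ, ∀ hk : k < n, c ⟨k, hk⟩ = 0 := by
        intro k
        induction k using Nat.strong_induction_on with
        | _ k ih =>
          intro hk
          have h2 : (ξ ^ (n - 1 - k)) (∑ j : Fin n, c j • (ξ ^ (j : ℕ)) η) = 0 := by
            rw [hc, map_zero]
          rw [map_sum] at h2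
          have h3 : ∀ j : Fin n,
              (ξ ^ (n - 1 - k)) (c j • (ξ ^ (j : ℕ)) η) =
                c j • (ξ ^ (n - 1 - k + (j : ℕ))) η := by
            intro j
            rw [map_smul, ← Module.End.mul_apply, ← pow_add]
          have h4 : ∑ j : Fin n, (ξ ^ (n - 1 - k)) (c j • (ξ ^ (j : ℕ)) η) =
              c ⟨k, hk⟩ • (ξ ^ (n - 1)) η := by
            rw [Finset.sum_eq_single (⟨k, hk⟩ : Fin n)]
            · rw [h3]
              have he : n - 1 - k + ((⟨k, hk⟩ : Fin n) : ℕ) = n - 1 := by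
                simp only [Fin.val_mk]; omega
              rw [he]
            · intro j _ hj
              rw [h3]
              have hjk : (j : ℕ) ≠ k := fun h => hj (Fin.ext h)
              rcases Nat.lt_or_ge (j : ℕ) k with h | h
              · have : c j = 0 := by
                  have := ih (j : ℕ) h j.isLt
                  simpa using this
                rw [this, zero_smul]
              · have hge : n ≤ n - 1 - k + (j : ℕ) := by omega
                rw [hξbig _ hge, LinearMap.zero_apply, smul_zero]
            · intro h
              exact absurd (Finset.mem_univ _) h
          rw [h4] at h2
          exact (smul_eq_zero.mp h2).resolve_right hTη
      intro k
      have := H k.1 k.2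
      simpa using this
    set S := Submodule.span F (Set.range fun i : Fin n => η ^ q ^ (i : ℕ)) with hS
    have hmemφ : ∀ i : ℕ, (φ ^ i) η ∈ S := by
      intro i
      have h1 : φ ^ i = φ ^ (i % n) := by
        conv_lhs => rw [← Nat.div_add_mod i n]
        rw [pow_add, pow_mul, hφn, one_pow, one_mul]
      rw [h1]
      apply Submodule.subset_span
      exact ⟨⟨i % n, Nat.mod_lt _ hn0⟩, (hφpow _ η).symm⟩
    have hmemP : ∀ gP : F[X], (Polynomial.aeval φ gP) η ∈ S := by
      intro gP
      have hrw := gP.as_sum_range' (gP.natDegree + 1) (Nat.lt_succ_self _)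
      rw [hrw, map_sum, LinearMap.sum_apply]
      apply Submodule.sum_mem
      intro i _
      rw [Polynomial.aeval_monomial, Module.End.mul_apply, Module.algebraMap_end_apply]
      exact Submodule.smul_mem _ _ (hmemφ i)
    have hmemξ : ∀ k : ℕ, (ξ ^ k) η ∈ S := by
      intro k
      have h1 : ξ ^ k = Polynomial.aeval φ (((X : F[X]) - 1) ^ k) := by
        rw [map_pow, map_sub, Polynomial.aeval_X, map_one, hξdef]
      rw [h1]
      exact hmemP _
    have hStop : S = ⊤ := by
      have hv : LinearIndependent F fun k : Fin n => (⟨(ξ ^ (k : ℕ)) η, hmemξ k⟩ : S) :=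
        LinearIndependent.of_comp S.subtype hindep
      have hle : n ≤ Module.finrank F S := by
        simpa using hv.fintype_card_le_finrank
      apply Submodule.eq_top_of_finrank_eq
      have hle2 : Module.finrank F S ≤ Module.finrank F K := Submodule.finrank_le S
      omega
    refine ⟨?_, hStop⟩
    exact linearIndependent_of_top_le_span_of_card_eq_finrank
      (le_of_eq hStop.symm) (by rw [Fintype.card_fin, hn])
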